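/- Let h be a holomorphic function on ℂ∖{0} such that the integral over ℂ∖{0} of |h(η)|² / (|η|²(|η|² + 1/|η|²)) with respect to Lebesgue measure is finite. Then h is constant. -/

import Mathlib

open MeasureTheory
open Metric Set Filter intervalIntegral
open scoped Real ENNReal Topology


/-- Circle sub-mean-value: for `g` holomorphic on a closed disc. -/
lemma circle_submean (g : ℂ → ℂ) {c : ℂ} {r : ℝ} (hr : 0 < r)
    (hg : DifferentiableOn ℂ g (closedBall c r)) :
    2 * π * ‖g c‖ ≤ ∫ θ in (0:ℝ)..(2*π), ‖g (circleMap c r θ)‖ := by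
  have hcont : ContinuousOn g (closedBall c r) := hg.continuousOn
  have hd : ∀ z ∈ ball c r \ (∅ : Set ℂ), DifferentiableAt ℂ g z := by
    intro z hz
    exact (hg z (ball_subset_closedBall hz.1)).differentiableAt
      (mem_nhds_iff.2 ⟨ball c r, ball_subset_closedBall, isOpen_ball, hz.1⟩)
  have key := Complex.circleIntegral_sub_center_inv_smul_of_differentiable_on_off_countable
    hr Set.countable_empty hcont hd
  rw [circleIntegral] at key
  have hne : ∀ θ : ℝ, circleMap 0 r θ ≠ 0 := fun θ => circleMap_ne_center hr.ne'
  have key2 : (∫ θ in (0:ℝ)..(2*π), Complex.I • g (circleMap c r θ))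
      = (2 * π * Complex.I : ℂ) • g c := by
    rw [← key]
    apply intervalIntegral.integral_congr
    intro θ _
    simp only [deriv_circleMap, circleMap_sub_center, smul_eq_mul]
    field_simp [hne θ]
  have key3 : Complex.I • (∫ θ in (0:ℝ)..(2*π), g (circleMap c r θ))
      = (2 * π * Complex.I : ℂ) • g c := by
    rw [← key2, ← intervalIntegral.integral_smul]
  have hnorm : ‖(2 * π * Complex.I : ℂ) • g c‖ = 2 * π * ‖g c‖ := by
    simp [norm_smul, Complex.norm_real, abs_of_nonneg Real.pi_pos.le]
  calc 2 * π * ‖g c‖ = ‖(2 * π * Complex.I : ℂ) • g c‖ := hnorm.symm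
    _ = ‖Complex.I • (∫ θ in (0:ℝ)..(2*π), g (circleMap c r θ))‖ := by rw [key3]
    _ = ‖∫ θ in (0:ℝ)..(2*π), g (circleMap c r θ)‖ := by
        simp [norm_smul]
    _ ≤ ∫ θ in (0:ℝ)..(2*π), ‖g (circleMap c r θ)‖ :=
        intervalIntegral.norm_integral_le_integral_norm Real.two_pi_pos.le

lemma csymm (c : ℂ) (r θ : ℝ) : c + Complex.polarCoord.symm (r, θ) = circleMap c r θ := by
  simp [circleMap, Complex.polarCoord_symm_apply, Complex.exp_mul_I]

lemma circleMap_cont (c : ℂ) : Continuous (fun p : ℝ × ℝ => circleMap c p.1 p.2) := by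
  unfold circleMap
  exact continuous_const.add ((Complex.continuous_ofReal.comp continuous_fst).mul
    (Complex.continuous_exp.comp ((Complex.continuous_ofReal.comp continuous_snd).mul
      continuous_const)))

lemma polar_fubini (φ : ℝ × ℝ → ℝ) (R : ℝ) (hI : IntegrableOn φ (Ioc (0:ℝ) R ×ˢ Ioo (-π) π)) :
    ∫ p in Ioc (0:ℝ) R ×ˢ Ioo (-π) π, φ p
      = ∫ r in Ioc (0:ℝ) R, ∫ θ in Ioo (-π) π, φ (r, θ) := by
  rw [Measure.volume_eq_prod]
  rw [Measure.volume_eq_prod] at hI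
  exact setIntegral_prod φ hI

lemma polar_marginal (φ : ℝ × ℝ → ℝ) (R : ℝ)
    (hI : IntegrableOn φ (Ioc (0:ℝ) R ×ˢ Ioo (-π) π)) :
    IntegrableOn (fun r => ∫ θ in Ioo (-π) π, φ (r, θ)) (Ioc (0:ℝ) R) := by
  rw [Measure.volume_eq_prod, IntegrableOn, ← Measure.prod_restrict] at hI
  exact hI.integral_prod_left

/-- Area sub-mean-value for the norm of a holomorphic function. -/
lemma area_submean (g : ℂ → ℂ) {c : ℂ} {R : ℝ} (hR : 0 < R)
    (hg : DifferentiableOn ℂ g (closedBall c R)) :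
    π * R^2 * ‖g c‖ ≤ ∫ z in closedBall c R, ‖g z‖ := by
  set F : ℂ → ℝ := (closedBall c R).indicator (fun w => ‖g w‖) with hF
  set S : Set (ℝ × ℝ) := Ioc (0:ℝ) R ×ˢ Ioo (-π) π with hS
  set φ : ℝ × ℝ → ℝ := fun p => p.1 * ‖g (circleMap c p.1 p.2)‖ with hφ
  -- continuity of φ on a compact rectangle
  have hKcp : IsCompact (Icc (0:ℝ) R ×ˢ Icc (-π) π) := (isCompact_Icc).prod isCompact_Icc
  have hmaps : MapsTo (fun p : ℝ × ℝ => circleMap c p.1 p.2) (Icc (0:ℝ) R ×ˢ Icc (-π) π)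
      (closedBall c R) := by
    intro p hp
    simp only [mem_closedBall, dist_eq_norm, circleMap, add_sub_cancel_left]
    rw [norm_mul]
    have h1 : ‖Complex.exp (p.2 * Complex.I)‖ = 1 := by
      rw [Complex.norm_exp]; simp
    rw [h1, mul_one, Complex.norm_real, Real.norm_eq_abs, abs_of_nonneg hp.1.1]
    exact hp.1.2
  have hφcont : ContinuousOn φ (Icc (0:ℝ) R ×ˢ Icc (-π) π) := by
    apply ContinuousOn.mul continuousOn_fst
    exact (hg.continuousOn.comp (circleMap_cont c).continuousOn hmaps).norm
  have hI : IntegrableOn φ S := by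
    apply (hφcont.integrableOn_compact hKcp).mono_set
    exact Set.prod_mono Ioc_subset_Icc_self Ioo_subset_Icc_self
  -- from area integral to polar integral
  have h1 : ∫ z in closedBall c R, ‖g z‖ = ∫ z : ℂ, F z := (MeasureTheory.integral_indicator
    (measurableSet_closedBall)).symm
  have h2 : ∫ z : ℂ, F z = ∫ z : ℂ, F (c + z) :=
    (integral_add_left_eq_self (μ := volume) F c).symm
  have h3 : ∫ z : ℂ, F (c + z)
      = ∫ p in polarCoord.target, p.1 • F (c + Complex.polarCoord.symm p) :=
    (Complex.integral_comp_polarCoord_symm (fun z => F (c + z))).symm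
  have h4 : ∫ p in polarCoord.target, p.1 • F (c + Complex.polarCoord.symm p)
      = ∫ p in S, p.1 • F (c + Complex.polarCoord.symm p) := by
    apply setIntegral_eq_of_subset_of_forall_diff_eq_zero polarCoord.open_target.measurableSet
    · rw [polarCoord_target]
      exact Set.prod_mono Ioc_subset_Ioi_self le_rfl
    · rintro ⟨r, θ⟩ hp
      rw [polarCoord_target] at hp
      have hr0 : (0:ℝ) < r := hp.1.1
      have hRr : R < r := by
        by_contra hc'
        exact hp.2 ⟨⟨hr0, not_lt.1 hc'⟩, hp.1.2⟩
      have hnb : c + Complex.polarCoord.symm (r, θ) ∉ closedBall c R := by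
        simp only [mem_closedBall, dist_eq_norm, add_sub_cancel_left, not_le]
        rw [Complex.norm_polarCoord_symm, abs_of_pos hr0]
        exact hRr
      show r • F (c + Complex.polarCoord.symm (r, θ)) = 0
      rw [hF, Set.indicator_of_notMem hnb, smul_zero]
  have h5 : ∫ p in S, p.1 • F (c + Complex.polarCoord.symm p) = ∫ p in S, φ p := by
    apply setIntegral_congr_fun (by rw [hS]; measurability)
    rintro ⟨r, θ⟩ hp
    have hball : c + Complex.polarCoord.symm (r, θ) ∈ closedBall c R := by
      simp only [mem_closedBall, dist_eq_norm, add_sub_cancel_left]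
      rw [Complex.norm_polarCoord_symm, abs_of_pos hp.1.1]
      exact hp.1.2
    show r • F (c + Complex.polarCoord.symm (r, θ)) = r * ‖g (circleMap c r θ)‖
    rw [hF, Set.indicator_of_mem hball, smul_eq_mul, csymm]
  have h6 : ∫ p in S, φ p = ∫ r in Ioc (0:ℝ) R, ∫ θ in Ioo (-π) π, φ (r, θ) := by
    rw [hS] at hI ⊢
    exact polar_fubini φ R hI
  -- inner bound
  have hinner : ∀ r ∈ Ioc (0:ℝ) R, 2 * π * ‖g c‖ * r ≤ ∫ θ in Ioo (-π) π, φ (r, θ) := by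
    intro r hr
    have hper : Function.Periodic (fun θ : ℝ => ‖g (circleMap c r θ)‖) (2 * π) :=
      (periodic_circleMap c r).comp fun z => ‖g z‖
    have hrw : ∫ θ in Ioo (-π) π, φ (r, θ) = r * ∫ θ in (0:ℝ)..(2*π), ‖g (circleMap c r θ)‖ := by
      simp only [hφ]
      rw [MeasureTheory.integral_const_mul, ← integral_Ioc_eq_integral_Ioo,
        ← intervalIntegral.integral_of_le (by linarith [Real.pi_pos] : -π ≤ π)]
      congr 1
      have hpe := hper.intervalIntegral_add_eq (-π) 0
      rw [zero_add] at hpe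
      rw [← hpe]
      congr 1
      ring
    rw [hrw]
    have hcs := circle_submean g hr.1 (hg.mono (closedBall_subset_closedBall hr.2))
    calc 2 * π * ‖g c‖ * r = r * (2 * π * ‖g c‖) := by ring
      _ ≤ r * ∫ θ in (0:ℝ)..(2*π), ‖g (circleMap c r θ)‖ :=
        mul_le_mul_of_nonneg_left hcs hr.1.le
  -- outer
  have hIout : IntegrableOn (fun r => ∫ θ in Ioo (-π) π, φ (r, θ)) (Ioc (0:ℝ) R) := by
    rw [hS] at hI
    exact polar_marginal φ R hI
  have h7 : ∫ r in Ioc (0:ℝ) R, 2 * π * ‖g c‖ * r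
      ≤ ∫ r in Ioc (0:ℝ) R, ∫ θ in Ioo (-π) π, φ (r, θ) := by
    have hint2 : IntegrableOn (fun r : ℝ => 2 * π * ‖g c‖ * r) (Ioc (0:ℝ) R) :=
      (continuous_const.mul continuous_id).integrableOn_Ioc
    exact setIntegral_mono_on hint2 hIout measurableSet_Ioc hinner
  have h8 : ∫ r in Ioc (0:ℝ) R, 2 * π * ‖g c‖ * r = π * R^2 * ‖g c‖ := by
    rw [← intervalIntegral.integral_of_le hR.le, intervalIntegral.integral_const_mul,
      integral_id]
    ring
  rw [h1, h2, h3, h4, h5, h6, ← h8]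
  exact h7

/-- Key weighted estimate. -/
lemma key_est (f : ℂ → ℂ) {z : ℂ} {r K : ℝ} (hr : 0 < r)
    (hf : DifferentiableOn ℂ f (closedBall z r))
    (hKb : ∀ η ∈ closedBall z r, 1 + ‖η‖^4 ≤ K) :
    ENNReal.ofReal (π * r^2 * ‖f z‖^2) ≤
      ENNReal.ofReal K * ∫⁻ η in closedBall z r, ENNReal.ofReal (‖f η‖^2 / (1+‖η‖^4)) := by
  have hg : DifferentiableOn ℂ (fun w => f w * f w) (closedBall z r) := hf.mul hf
  have hnormsq : ∀ w : ℂ, ‖f w * f w‖ = ‖f w‖^2 := fun w => by rw [norm_mul, sq]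
  have hA := area_submean (fun w => f w * f w) hr hg
  rw [hnormsq] at hA
  have hA2 : π * r^2 * ‖f z‖^2 ≤ ∫ η in closedBall z r, ‖f η‖^2 := by
    refine hA.trans_eq ?_
    exact setIntegral_congr_fun measurableSet_closedBall fun w _ => hnormsq w
  have hInt : IntegrableOn (fun η => ‖f η‖^2) (closedBall z r) := by
    have : ContinuousOn (fun η => ‖f η‖^2) (closedBall z r) := (hf.continuousOn.norm).pow 2
    exact this.integrableOn_compact (isCompact_closedBall z r)
  have h1 : ENNReal.ofReal (π * r^2 * ‖f z‖^2)
      ≤ ∫⁻ η in closedBall z r, ENNReal.ofReal (‖f η‖^2) := by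
    refine (ENNReal.ofReal_le_ofReal hA2).trans_eq ?_
    exact ofReal_integral_eq_lintegral_ofReal hInt
      (Filter.Eventually.of_forall fun w => sq_nonneg _)
  refine h1.trans ?_
  rw [← lintegral_const_mul' _ _ ENNReal.ofReal_ne_top]
  refine lintegral_mono_ae ?_
  filter_upwards [ae_restrict_mem measurableSet_closedBall] with η hη
  have hd : (0:ℝ) < 1 + ‖η‖^4 := by positivity
  have hKpos : (0:ℝ) ≤ K := le_trans hd.le (hKb η hη)
  rw [← ENNReal.ofReal_mul hKpos]
  apply ENNReal.ofReal_le_ofReal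
  rw [div_eq_inv_mul, ← mul_assoc]
  calc ‖f η‖^2 = ((1 + ‖η‖^4) * (1 + ‖η‖^4)⁻¹) * ‖f η‖^2 := by
        rw [mul_inv_cancel₀ hd.ne', one_mul]
    _ ≤ (K * (1 + ‖η‖^4)⁻¹) * ‖f η‖^2 := by
        have := hKb η hη
        gcongr

/-- A holomorphic function `h` on `ℂ ∖ {0}` whose squared modulus is integrable
against the weight `1 / (|η|² (|η|² + |η|⁻²))` (Lebesgue area measure) is constant. -/
theorem stmt0 (h : ℂ → ℂ) (hol : DifferentiableOn ℂ h ({0}ᶜ : Set ℂ))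
    (hint : ∫⁻ η in ({0}ᶜ : Set ℂ),
        ENNReal.ofReal (‖h η‖ ^ 2 / (‖η‖ ^ 2 * (‖η‖ ^ 2 + (‖η‖ ^ 2)⁻¹))) < ⊤) :
    ∃ c : ℂ, ∀ η : ℂ, η ≠ 0 → h η = c := by
  have hsing : (volume : Measure ℂ) {0} = 0 := measure_singleton 0
  have haeuniv : ({0}ᶜ : Set ℂ) =ᵐ[volume] (univ : Set ℂ) := by
    rw [ae_eq_univ, compl_compl]
    exact hsing
  set g : ℂ → ℝ≥0∞ := fun η => ENNReal.ofReal (‖h η‖^2 / (1 + ‖η‖^4)) with hg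
  -- the total weighted integral is finite
  have hTuniv : ∫⁻ η, g η < ⊤ := by
    have e1 : ∫⁻ η, g η = ∫⁻ η in ({0}ᶜ : Set ℂ), g η := by
      rw [setLIntegral_congr haeuniv, Measure.restrict_univ]
    have e2 : ∫⁻ η in ({0}ᶜ : Set ℂ), g η
        = ∫⁻ η in ({0}ᶜ : Set ℂ),
            ENNReal.ofReal (‖h η‖ ^ 2 / (‖η‖ ^ 2 * (‖η‖ ^ 2 + (‖η‖ ^ 2)⁻¹))) := by
      apply setLIntegral_congr_fun (isOpen_compl_singleton.measurableSet)
      intro η hη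
      have hn : ‖η‖ ≠ 0 := norm_ne_zero_iff.2 hη
      rw [hg]; beta_reduce
      have h2 : ‖η‖^2 ≠ 0 := pow_ne_zero 2 hn
      have h3 : ‖η‖^2 * (‖η‖^2)⁻¹ = 1 := mul_inv_cancel₀ h2
      rw [show ‖η‖^2 * (‖η‖^2 + (‖η‖^2)⁻¹) = 1 + ‖η‖^4 by
        calc ‖η‖^2 * (‖η‖^2 + (‖η‖^2)⁻¹) = ‖η‖^2 * (‖η‖^2)⁻¹ + ‖η‖^2*‖η‖^2 := by ring
          _ = 1 + ‖η‖^4 := by rw [h3]; ring]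
    rw [e1, e2]
    exact hint
  -- small balls at the origin
  have hT0 : ∀ ε : ℝ≥0∞, 0 < ε → ∃ δ : ℝ, 0 < δ ∧ ∫⁻ η in closedBall (0:ℂ) δ, g η < ε := by
    intro ε hε
    have hμ : Tendsto (fun n : ℕ => volume (closedBall (0:ℂ) (1/(n+1)))) atTop (𝓝 0) := by
      simp only [Complex.volume_closedBall]
      have h0 : Tendsto (fun n : ℕ => ENNReal.ofReal (1/(n+1))) atTop (𝓝 0) := by
        rw [show (0:ℝ≥0∞) = ENNReal.ofReal 0 by simp]
        exact ENNReal.tendsto_ofReal tendsto_one_div_add_atTop_nhds_zero_nat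
      have h1 : Tendsto (fun n : ℕ => ENNReal.ofReal (1/(n+1)) ^ 2) atTop (𝓝 0) := by
        simpa using ENNReal.Tendsto.pow (n := 2) h0
      simpa using ENNReal.Tendsto.mul_const h1 (Or.inr (by simp))
    have := tendsto_setLIntegral_zero hTuniv.ne
      (l := atTop) (s := fun n : ℕ => closedBall (0:ℂ) (1/(n+1))) hμ
    have hev := this.eventually_lt_const hε
    obtain ⟨n, hn⟩ := hev.exists
    exact ⟨1/(n+1), by positivity, hn⟩
  -- a.e. measurability of the weight
  have ham : AEMeasurable h volume := by
    have h1 : AEMeasurable h (volume.restrict ({0}ᶜ : Set ℂ)) :=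
      hol.continuousOn.aemeasurable isOpen_compl_singleton.measurableSet
    rwa [Measure.restrict_congr_set haeuniv, Measure.restrict_univ] at h1
  have hgm : AEMeasurable g volume := by
    apply ENNReal.measurable_ofReal.comp_aemeasurable
    exact (ham.norm.pow_const 2).div
      (((measurable_norm.pow_const 4).const_add 1).aemeasurable)
  -- tails at infinity
  have hTtail : ∀ ε : ℝ≥0∞, 0 < ε → ∃ M : ℝ, 1 ≤ M ∧ ∫⁻ η in (ball (0:ℂ) M)ᶜ, g η < ε := by
    intro ε hε
    have hmeasb : ∀ n : ℕ, MeasurableSet ((ball (0:ℂ) (n:ℝ))ᶜ) :=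
      fun n => isOpen_ball.measurableSet.compl
    have htend : Tendsto (fun n : ℕ => ∫⁻ η, ((ball (0:ℂ) (n:ℝ))ᶜ).indicator g η) atTop
        (𝓝 (∫⁻ (_ : ℂ), 0)) := by
      apply tendsto_lintegral_of_dominated_convergence' g
        (fun n => hgm.indicator (hmeasb n))
        (fun n => Filter.Eventually.of_forall fun η => Set.indicator_le_self _ _ _)
        hTuniv.ne
      refine Filter.Eventually.of_forall fun η => ?_
      have hev : ∀ᶠ n : ℕ in atTop, ((ball (0:ℂ) (n:ℝ))ᶜ).indicator g η = 0 := by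
        filter_upwards [eventually_gt_atTop ⌈‖η‖⌉₊] with n hn
        apply Set.indicator_of_notMem
        simp only [mem_compl_iff, mem_ball, dist_zero_right, not_not]
        calc ‖η‖ ≤ (⌈‖η‖⌉₊ : ℝ) := Nat.le_ceil _
          _ < (n : ℝ) := by exact_mod_cast hn
      have hev' : (fun n : ℕ => ((ball (0:ℂ) (n:ℝ))ᶜ).indicator g η) =ᶠ[atTop]
          (fun _ => 0) := hev
      exact Tendsto.congr' hev'.symm tendsto_const_nhds
    rw [lintegral_zero] at htend
    have hev := htend.eventually_lt_const hε
    obtain ⟨n, hn, hn1⟩ := (hev.and (eventually_ge_atTop 1)).exists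
    refine ⟨(n:ℝ), by exact_mod_cast hn1, ?_⟩
    rwa [← lintegral_indicator (hmeasb n)]
  -- the sub-mean-value estimate in our setting
  have hstep : ∀ (f : ℂ → ℂ) (z : ℂ) (K : ℝ), z ≠ 0 →
      DifferentiableOn ℂ f (closedBall z (‖z‖/2)) →
      (∀ η ∈ closedBall z (‖z‖/2), 1 + ‖η‖^4 ≤ K) →
      (∀ η : ℂ, η ≠ 0 → f η = h η) →
      ENNReal.ofReal (π * (‖z‖/2)^2 * ‖f z‖^2)
        ≤ ENNReal.ofReal K * ∫⁻ η in closedBall z (‖z‖/2), g η := by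
    intro f z K hz hdf hKb hfh
    have hzpos : 0 < ‖z‖ := norm_pos_iff.2 hz
    have hr : 0 < ‖z‖/2 := by positivity
    refine (key_est f hr hdf hKb).trans ?_
    refine mul_le_mul_right (le_of_eq (lintegral_congr_ae ?_)) _
    have h0 : ∀ᵐ η : ℂ ∂(volume.restrict (closedBall z (‖z‖/2))), η ≠ 0 := by
      refine ae_restrict_of_ae ?_
      rw [ae_iff]
      convert hsing using 2
      ext η
      simp
    filter_upwards [h0] with η hη
    rw [hg, hfh η hη]
  -- little-o bound near the origin
  have hlittle : (fun z : ℂ => h z - h 0) =o[𝓝[≠] (0:ℂ)] fun z => (z - 0)⁻¹ := by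
    have ho1 : (fun z : ℂ => h z) =o[𝓝[≠] (0:ℂ)] fun z => z⁻¹ := by
      rw [Asymptotics.isLittleO_iff]
      intro c hc
      obtain ⟨δ, hδ, hTδ⟩ := hT0 (ENNReal.ofReal (π * c^2/28))
        (ENNReal.ofReal_pos.2 (by positivity))
      have hev1 : ∀ᶠ z : ℂ in 𝓝[≠] (0:ℂ), ‖z‖ < min 1 (2*δ/3) := by
        apply eventually_nhdsWithin_of_eventually_nhds
        have hmin : (0:ℝ) < min 1 (2*δ/3) := lt_min zero_lt_one (by positivity)
        have hb := Metric.ball_mem_nhds (0:ℂ) hmin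
        exact eventually_of_mem hb (fun z hz => by rwa [mem_ball, dist_zero_right] at hz)
      have hev2 : ∀ᶠ z : ℂ in 𝓝[≠] (0:ℂ), z ≠ 0 := eventually_mem_nhdsWithin
      filter_upwards [hev1, hev2] with z hz1 hz2
      have hzpos : 0 < ‖z‖ := norm_pos_iff.2 hz2
      have hz1a : ‖z‖ < 1 := lt_of_lt_of_le hz1 (min_le_left _ _)
      have hz1b : ‖z‖ < 2*δ/3 := lt_of_lt_of_le hz1 (min_le_right _ _)
      have hnormbd : ∀ η ∈ closedBall z (‖z‖/2), ‖η‖ ≤ 3*‖z‖/2 := by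
        intro η hη
        rw [mem_closedBall, dist_eq_norm] at hη
        calc ‖η‖ = ‖z + (η - z)‖ := by ring_nf
          _ ≤ ‖z‖ + ‖η - z‖ := norm_add_le _ _
          _ ≤ ‖z‖ + ‖z‖/2 := by linarith
          _ = 3*‖z‖/2 := by ring
      have hKb : ∀ η ∈ closedBall z (‖z‖/2), 1 + ‖η‖^4 ≤ 7 := by
        intro η hη
        have h1 := hnormbd η hη
        have h2 : ‖η‖^4 ≤ (3*‖z‖/2)^4 := by
          apply pow_le_pow_left₀ (norm_nonneg _) h1
        have hz4 : ‖z‖^4 ≤ 1 := pow_le_one₀ (norm_nonneg _) hz1a.le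
        nlinarith [h2, hz4]
      have hdf : DifferentiableOn ℂ h (closedBall z (‖z‖/2)) := by
        apply hol.mono
        intro w hw
        simp only [mem_compl_iff, mem_singleton_iff]
        intro hw0
        rw [mem_closedBall, hw0, dist_eq_norm, zero_sub, norm_neg] at hw
        linarith
      have hest := hstep h z 7 hz2 hdf hKb (fun _ _ => rfl)
      have hsub : closedBall z (‖z‖/2) ⊆ closedBall (0:ℂ) δ := by
        intro w hw
        rw [mem_closedBall, dist_eq_norm, sub_zero]
        calc ‖w‖ ≤ 3*‖z‖/2 := hnormbd w hw
          _ ≤ δ := by linarith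
      have hchain : ENNReal.ofReal (π * (‖z‖/2)^2 * ‖h z‖^2)
          ≤ ENNReal.ofReal 7 * ENNReal.ofReal (π * c^2/28) := by
        refine hest.trans ?_
        exact mul_le_mul_right ((lintegral_mono_set hsub).trans hTδ.le) _
      rw [← ENNReal.ofReal_mul (by norm_num)] at hchain
      have hre : π * (‖z‖/2)^2 * ‖h z‖^2 ≤ 7 * (π * c^2/28) := by
        have := (ENNReal.ofReal_le_ofReal_iff (by positivity)).1 hchain
        exact this
      have hfin : ‖z‖ * ‖h z‖ ≤ c := by
        have hsq : (‖z‖ * ‖h z‖)^2 ≤ c^2 := by nlinarith [Real.pi_pos]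
        nlinarith [norm_nonneg z, norm_nonneg (h z), mul_nonneg (norm_nonneg z) (norm_nonneg (h z)), hc.le]
      rw [norm_inv, ← div_eq_mul_inv, le_div_iff₀ hzpos, mul_comm]
      exact hfin
    have ho2 : (fun _ : ℂ => h 0) =o[𝓝[≠] (0:ℂ)] fun z : ℂ => z⁻¹ := by
      apply Asymptotics.isLittleO_const_left.2
      right
      have h1 : Tendsto (fun z : ℂ => ‖z‖) (𝓝[≠] (0:ℂ)) (𝓝[>] 0) := by
        rw [tendsto_nhdsWithin_iff]
        constructor
        · exact tendsto_norm_zero.mono_left nhdsWithin_le_nhds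
        · exact eventually_mem_nhdsWithin.mono fun z hz => norm_pos_iff.2 hz
      have h2 := tendsto_inv_nhdsGT_zero.comp h1
      apply h2.congr
      intro z
      simp [norm_inv]
    simpa using ho1.sub ho2
  -- remove the singularity
  set H : ℂ → ℂ := Function.update h 0 (limUnder (𝓝[≠] (0:ℂ)) h) with hHdef
  have hHd : Differentiable ℂ H := by
    have hins := Complex.differentiableOn_update_limUnder_insert_of_isLittleO
      (c := (0:ℂ)) (s := ({0}ᶜ : Set ℂ)) self_mem_nhdsWithin hol hlittle
    rw [Set.insert_eq, Set.union_compl_self] at hins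
    exact differentiableOn_univ.1 hins
  have hHh : ∀ z : ℂ, z ≠ 0 → H z = h z := fun z hz => Function.update_of_ne hz _ _
  -- growth estimate at infinity
  have hgrow : ∀ ε : ℝ, 0 < ε → ∃ M : ℝ, 1 ≤ M ∧ ∀ z : ℂ, M ≤ ‖z‖ → ‖H z‖ ≤ ε * ‖z‖ := by
    intro ε hε
    obtain ⟨M₀, hM₀, hTM⟩ := hTtail (ENNReal.ofReal (π * ε^2/28))
      (ENNReal.ofReal_pos.2 (by positivity))
    refine ⟨2*M₀, by linarith, ?_⟩
    intro z hz
    have hz1 : 1 ≤ ‖z‖ := by linarith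
    have hz0 : z ≠ 0 := norm_pos_iff.1 (by linarith)
    have hzpos : 0 < ‖z‖ := norm_pos_iff.2 hz0
    have hnormbd : ∀ η ∈ closedBall z (‖z‖/2), ‖η‖ ≤ 3*‖z‖/2 := by
      intro η hη
      rw [mem_closedBall, dist_eq_norm] at hη
      calc ‖η‖ = ‖z + (η - z)‖ := by ring_nf
        _ ≤ ‖z‖ + ‖η - z‖ := norm_add_le _ _
        _ ≤ ‖z‖ + ‖z‖/2 := by linarith
        _ = 3*‖z‖/2 := by ring
    have hKb : ∀ η ∈ closedBall z (‖z‖/2), 1 + ‖η‖^4 ≤ 7*‖z‖^4 := by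
      intro η hη
      have h1 := hnormbd η hη
      have h2 : ‖η‖^4 ≤ (3*‖z‖/2)^4 := pow_le_pow_left₀ (norm_nonneg _) h1 4
      have hz4 : 1 ≤ ‖z‖^4 := one_le_pow₀ hz1
      nlinarith [h2, hz4]
    have hest := hstep H z (7*‖z‖^4) hz0 hHd.differentiableOn hKb hHh
    have hsub2 : closedBall z (‖z‖/2) ⊆ (ball (0:ℂ) M₀)ᶜ := by
      intro w hw
      rw [mem_closedBall, dist_eq_norm] at hw
      simp only [mem_compl_iff, mem_ball, dist_zero_right, not_lt]
      have h4 : ‖z‖ - ‖w‖ ≤ ‖z - w‖ := norm_sub_norm_le z w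
      have h3 : ‖z - w‖ = ‖w - z‖ := norm_sub_rev _ _
      linarith
    have hchain : ENNReal.ofReal (π * (‖z‖/2)^2 * ‖H z‖^2)
        ≤ ENNReal.ofReal (7*‖z‖^4) * ENNReal.ofReal (π * ε^2/28) := by
      refine hest.trans ?_
      exact mul_le_mul_right ((lintegral_mono_set hsub2).trans hTM.le) _
    rw [← ENNReal.ofReal_mul (by positivity)] at hchain
    have hre : π * (‖z‖/2)^2 * ‖H z‖^2 ≤ 7*‖z‖^4 * (π * ε^2/28) :=
      (ENNReal.ofReal_le_ofReal_iff (by positivity)).1 hchain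
    have hz2 : (0:ℝ) < ‖z‖^2 := by positivity
    have h4 : π/4 * (‖z‖^2*‖H z‖^2) ≤ π/4 * (ε^2*‖z‖^4) := by nlinarith [hre]
    have hA : ‖z‖^2*‖H z‖^2 ≤ ε^2*‖z‖^4 :=
      (mul_le_mul_iff_right₀ (by positivity : (0:ℝ) < π/4)).1 h4
    have hA' : ‖z‖^2 * ‖H z‖^2 ≤ ‖z‖^2 * (ε^2*‖z‖^2) := by nlinarith [hA]
    have hsq : ‖H z‖^2 ≤ (ε*‖z‖)^2 := by
      have hB := (mul_le_mul_iff_right₀ hz2).1 hA'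
      nlinarith [hB]
    nlinarith [norm_nonneg (H z), mul_nonneg hε.le (norm_nonneg z), hsq]
  -- Liouville-type argument
  have hderiv : ∀ c : ℂ, deriv H c = 0 := by
    intro c
    refine norm_le_zero_iff.1 (le_of_forall_gt_imp_ge_of_dense fun ε hε => ?_)
    obtain ⟨M, hM1, hMb⟩ := hgrow (ε/2) (by positivity)
    set R : ℝ := M + ‖c‖ with hRdef
    have hR : 0 < R := by have := norm_nonneg c; linarith
    have hsp : ∀ w ∈ sphere c R, ‖H w‖ ≤ ε/2 * (‖c‖ + R) := by
      intro w hw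
      rw [mem_sphere, dist_eq_norm] at hw
      have hwlb : M ≤ ‖w‖ := by
        have h1 : ‖w - c‖ - ‖c‖ ≤ ‖w‖ := by
          have := norm_sub_le w c
          have h2 := norm_le_norm_add_norm_sub' w c
          have h3 := norm_sub_norm_le w c
          nlinarith [norm_add_le (w - c) c, norm_nonneg c]
        rw [hw] at h1
        linarith
      have hub : ‖w‖ ≤ ‖c‖ + R := by
        calc ‖w‖ = ‖c + (w - c)‖ := by ring_nf
          _ ≤ ‖c‖ + ‖w - c‖ := norm_add_le _ _
          _ = ‖c‖ + R := by rw [hw]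
      calc ‖H w‖ ≤ ε/2 * ‖w‖ := hMb w hwlb
        _ ≤ ε/2 * (‖c‖ + R) := by nlinarith
    have hdb := Complex.norm_deriv_le_of_forall_mem_sphere_norm_le hR
      hHd.diffContOnCl hsp
    refine hdb.trans ?_
    rw [div_le_iff₀ hR]
    nlinarith [norm_nonneg c, hε.le]
  have hconst := is_const_of_deriv_eq_zero hHd hderiv
  exact ⟨H 1, fun η hη => by rw [← hHh η hη, hconst η 1]⟩
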